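/- Suppose F = f + Ψ attains its minimum value F* at a point x*. Let x ∈ E with ‖x − x*‖_L > 0, let δ = (δ_1,…,δ_n) with δ_i ≥ 0, let T be a δ-inexact update at x, and set δ̄ = (1/n)·Σ_{i=1}^n δ_i. Then (1/n) Σ_{i=1}^n F(x + U_i T_i) − F* ≤ δ̄ + max{ 1 − (F(x) − F*)/(2n‖x − x*‖_L²), 1 − 1/(2n) } · (F(x) − F*). -/

import Mathlib

open scoped RealInnerProductSpace
open MeasureTheory

set_option linter.unusedSectionVars false
set_option maxHeartbeats 1000000

noncomputable section

variable {n : ℕ} {E : Fin n → Type*} [∀ i, NormedAddCommGroup (E i)]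
  [∀ i, InnerProductSpace ℝ (E i)] [∀ i, FiniteDimensional ℝ (E i)]

/-- `U i t`: embedding of the `i`-th block into the product space `E = E₁ × ⋯ × Eₙ`
(the vector with `i`-th block equal to `t` and all other blocks zero). -/
def blockEmbed (i : Fin n) (t : E i) : PiLp 2 E :=
  (WithLp.equiv 2 (∀ j, E j)).symm (Pi.single i t)

/-- `V_i(x,t) = ⟨∇_i f(x), t⟩ + (L_i/2)‖t‖² + Ψ_i(x_i + t)`. -/
def Vi (f : PiLp 2 E → ℝ) (L : Fin n → ℝ) (Ψ : ∀ i, E i → ℝ)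
    (x : PiLp 2 E) (i : Fin n) (t : E i) : ℝ :=
  ⟪(gradient f x) i, t⟫ + L i / 2 * ‖t‖ ^ 2 + Ψ i (x i + t)

/-- `T` is a `δ`-inexact update at `x`:
`V_i(x, T_i) ≤ min{V_i(x,0), δ_i + inf_t V_i(x,t)}` for every block `i`. -/
def IsInexactUpdate (f : PiLp 2 E → ℝ) (L : Fin n → ℝ) (Ψ : ∀ i, E i → ℝ)
    (δ : Fin n → ℝ) (x T : PiLp 2 E) : Prop :=
  ∀ i, Vi f L Ψ x i (T i) ≤ min (Vi f L Ψ x i 0) (δ i + ⨅ t : E i, Vi f L Ψ x i t)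

/-- `H(x,T) = f(x) + ⟨∇f(x), T⟩ + (1/2)‖T‖_L² + Ψ(x+T)`. -/
def Hfun (f : PiLp 2 E → ℝ) (L : Fin n → ℝ) (Ψ : ∀ i, E i → ℝ) (x T : PiLp 2 E) : ℝ :=
  f x + ⟪gradient f x, T⟫ + (1/2) * ∑ i, L i * ‖T i‖ ^ 2 + ∑ i, Ψ i (x i + T i)

/-- `F = f + Ψ` where `Ψ(x) = Σ_i Ψ_i(x_i)`. -/
def Ffun (f : PiLp 2 E → ℝ) (Ψ : ∀ i, E i → ℝ) (x : PiLp 2 E) : ℝ :=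
  f x + ∑ i, Ψ i (x i)

/-! ### Auxiliary lemmas -/

lemma blockEmbed_apply (i j : Fin n) (t : E i) : blockEmbed i t j = Pi.single i t j := rfl

lemma blockEmbed_smul (i : Fin n) (t : E i) (s : ℝ) :
    blockEmbed i (s • t) = s • blockEmbed i t := by
  apply (WithLp.equiv 2 (∀ j, E j)).injective
  ext j
  simp [blockEmbed, Pi.single_smul]

lemma inner_blockEmbed (a : PiLp 2 E) (i : Fin n) (t : E i) :
    ⟪a, blockEmbed i t⟫ = ⟪a i, t⟫ := by
  rw [PiLp.inner_apply]
  rw [Finset.sum_eq_single_of_mem i (Finset.mem_univ i)]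
  · simp [blockEmbed_apply]
  · intro j _ hj
    simp [blockEmbed_apply, Pi.single_eq_of_ne hj]

lemma hasDerivAt_line (f : PiLp 2 E → ℝ) (hf : Differentiable ℝ f) (x v : PiLp 2 E) (s : ℝ) :
    HasDerivAt (fun s : ℝ => f (x + s • v)) ⟪gradient f (x + s • v), v⟫ s := by
  have h1 : HasDerivAt (fun s : ℝ => x + s • v) v s := by
    simpa using ((hasDerivAt_id s).smul_const v).const_add x
  have h2 := (hf (x + s • v)).hasGradientAt.hasFDerivAt
  have h3 := h2.comp_hasDerivAt s h1
  simpa [InnerProductSpace.toDual_apply_apply, Function.comp_def] using h3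

/-- The subgradient inequality for a convex differentiable function. -/
lemma grad_ineq (f : PiLp 2 E → ℝ) (hf : Differentiable ℝ f)
    (hconv : ConvexOn ℝ Set.univ f) (x v : PiLp 2 E) :
    f x + ⟪gradient f x, v⟫ ≤ f (x + v) := by
  have hgconv : ConvexOn ℝ Set.univ (fun s : ℝ => f (x + s • v)) := by
    have h := hconv.comp_affineMap (AffineMap.lineMap x (x + v) : ℝ →ᵃ[ℝ] PiLp 2 E)
    have he : (fun s : ℝ => f (x + s • v)) =
        (f ∘ (AffineMap.lineMap x (x + v) : ℝ →ᵃ[ℝ] PiLp 2 E)) := by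
      funext s
      simp [AffineMap.lineMap_apply]
      rw [add_comm]
    rw [he]
    simpa using h
  have hd := hasDerivAt_line f hf x v 0
  have hd0 : HasDerivAt (fun s : ℝ => f (x + s • v)) ⟪gradient f x, v⟫ 0 := by
    simpa using hd
  have := hgconv.le_slope_of_hasDerivAt (Set.mem_univ 0) (Set.mem_univ 1) one_pos hd0
  rw [slope_def_field] at this
  simp only [one_smul, zero_smul, add_zero, sub_zero, div_one] at this
  linarith

/-- Block descent lemma. -/
lemma descent_lemma (f : PiLp 2 E → ℝ) (hf : Differentiable ℝ f) (L : Fin n → ℝ)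
    (hL : ∀ i, 0 < L i)
    (hLip : ∀ (x : PiLp 2 E) (i : Fin n) (t : E i),
      ‖(gradient f (x + blockEmbed i t)) i - (gradient f x) i‖ ≤ L i * ‖t‖)
    (x : PiLp 2 E) (i : Fin n) (t : E i) :
    f (x + blockEmbed i t) ≤ f x + ⟪(gradient f x) i, t⟫ + L i / 2 * ‖t‖ ^ 2 := by
  set v := blockEmbed i t with hv
  set φ : ℝ → ℝ := fun s =>
    f x + s * ⟪(gradient f x) i, t⟫ + L i * ‖t‖ ^ 2 * s ^ 2 / 2 - f (x + s • v) with hφ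
  have hder : ∀ s : ℝ, HasDerivAt φ
      (⟪(gradient f x) i, t⟫ + L i * ‖t‖ ^ 2 * s - ⟪gradient f (x + s • v), v⟫) s := by
    intro s
    have h1 := hasDerivAt_line f hf x v s
    have h2 : HasDerivAt (fun s : ℝ =>
        f x + s * ⟪(gradient f x) i, t⟫ + L i * ‖t‖ ^ 2 * s ^ 2 / 2)
        (⟪(gradient f x) i, t⟫ + L i * ‖t‖ ^ 2 * s) s := by
      have ha : HasDerivAt (fun s : ℝ => s * ⟪(gradient f x) i, t⟫)
          ⟪(gradient f x) i, t⟫ s := by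
        simpa using (hasDerivAt_id s).mul_const ⟪(gradient f x) i, t⟫
      have hb : HasDerivAt (fun s : ℝ => L i * ‖t‖ ^ 2 * s ^ 2 / 2)
          (L i * ‖t‖ ^ 2 * s) s := by
        have := ((hasDerivAt_pow 2 s).const_mul (L i * ‖t‖ ^ 2)).div_const 2
        refine this.congr_deriv ?_
        rw [show (2:ℕ) - 1 = 1 from rfl]
        push_cast
        ring
      simpa [Pi.add_def] using (ha.const_add (f x)).add hb
    simpa [Pi.sub_def, hφ] using h2.sub h1
  have hmono : MonotoneOn φ (Set.Icc (0:ℝ) 1) := by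
    apply monotoneOn_of_deriv_nonneg (convex_Icc 0 1)
    · exact fun s _ => (hder s).differentiableAt.continuousAt.continuousWithinAt
    · exact fun s _ => ((hder s).differentiableAt).differentiableWithinAt
    · intro s hs
      rw [interior_Icc] at hs
      rw [(hder s).deriv]
      have hxv : x + s • v = x + blockEmbed i (s • t) := by rw [blockEmbed_smul]
      have hlip := hLip x i (s • t)
      rw [← hxv] at hlip
      have hib : ⟪gradient f (x + s • v), v⟫ = ⟪(gradient f (x + s • v)) i, t⟫ :=
        inner_blockEmbed _ i t
      rw [hib]
      have hsub : ⟪(gradient f (x + s • v)) i, t⟫ - ⟪(gradient f x) i, t⟫ =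
          ⟪(gradient f (x + s • v)) i - (gradient f x) i, t⟫ := by
        rw [inner_sub_left]
      have h3 : ⟪(gradient f (x + s • v)) i - (gradient f x) i, t⟫ ≤
          L i * ‖s • t‖ * ‖t‖ :=
        le_trans (real_inner_le_norm _ _) (by
          apply mul_le_mul_of_nonneg_right hlip (norm_nonneg _))
      rw [norm_smul] at h3
      have hs0 : 0 ≤ s := le_of_lt hs.1
      have : ‖(s:ℝ)‖ = s := by rw [Real.norm_eq_abs, abs_of_nonneg hs0]
      rw [this] at h3
      nlinarith [norm_nonneg t, (hL i).le]
  have h01 := hmono (Set.mem_Icc.mpr ⟨le_refl 0, zero_le_one⟩)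
    (Set.mem_Icc.mpr ⟨zero_le_one, le_refl 1⟩) zero_le_one
  simp only [hφ, zero_smul, add_zero, one_smul] at h01
  simp at h01
  linarith

/-- A continuous convex function on a finite-dimensional space has a linear-in-norm
lower bound around a point. -/
lemma convex_lower_bound {G : Type*} [NormedAddCommGroup G] [InnerProductSpace ℝ G]
    [FiniteDimensional ℝ G] (Ψ : G → ℝ) (hconv : ConvexOn ℝ Set.univ Ψ)
    (hcont : Continuous Ψ) (z : G) :
    ∃ M : ℝ, 0 ≤ M ∧ ∀ t : G, Ψ z - M * ‖t‖ ≤ Ψ (z + t) := by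
  obtain ⟨C, hC⟩ := (isCompact_closedBall z 1).exists_bound_of_continuousOn
    hcont.continuousOn
  have hC0 : 0 ≤ C := le_trans (norm_nonneg _) (hC z (Metric.mem_closedBall_self zero_le_one))
  refine ⟨2 * C, by linarith, fun t => ?_⟩
  rcases eq_or_ne t 0 with rfl | ht
  · simp
  · have htn : 0 < ‖t‖ := norm_pos_iff.mpr ht
    set u : G := ‖t‖⁻¹ • t with hu
    have hun : ‖u‖ = 1 := by
      rw [hu, norm_smul, norm_inv, norm_norm, inv_mul_cancel₀ htn.ne']
    set θ : ℝ := ‖t‖ / (1 + ‖t‖) with hθ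
    have h1t : (0:ℝ) < 1 + ‖t‖ := by linarith
    have hθ0 : 0 ≤ θ := div_nonneg htn.le h1t.le
    have hθ1 : 1 - θ = 1 / (1 + ‖t‖) := by
      rw [hθ]; field_simp; ring
    have hθ1' : 0 ≤ 1 - θ := by rw [hθ1]; positivity
    have hcomb : θ • (z - u) + (1 - θ) • (z + t) = z := by
      have hterm : θ • u = (1 - θ) • t := by
        rw [hu, hθ1, smul_smul]
        congr 1
        rw [hθ]
        field_simp
      rw [smul_sub, smul_add]
      rw [hterm]
      have : θ • z + (1 - θ) • z = z := by
        rw [← add_smul]; simp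
      abel_nf
      rw [← add_smul]
      simp
    have hcx := hconv.2 (Set.mem_univ (z - u)) (Set.mem_univ (z + t)) hθ0 hθ1' (by ring)
    rw [hcomb] at hcx
    have hbound : |Ψ (z - u)| ≤ C := by
      have := hC (z - u) (by
        rw [Metric.mem_closedBall, dist_eq_norm]
        simp [hun])
      rwa [Real.norm_eq_abs] at this
    have hbz : |Ψ z| ≤ C := by
      have := hC z (Metric.mem_closedBall_self zero_le_one)
      rwa [Real.norm_eq_abs] at this
    have habs1 := abs_le.mp hbound
    have habs2 := abs_le.mp hbz
    have hsm : θ * Ψ (z - u) + (1 - θ) * Ψ (z + t) = θ • Ψ (z - u) + (1 - θ) • Ψ (z + t) := rfl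
    have hmul : (1 + ‖t‖) * Ψ z ≤ ‖t‖ * Ψ (z - u) + Ψ (z + t) := by
      have h2 : Ψ z ≤ θ * Ψ (z - u) + (1 - θ) * Ψ (z + t) := by rw [hsm]; exact hcx
      have h3 := mul_le_mul_of_nonneg_left h2 h1t.le
      calc (1 + ‖t‖) * Ψ z ≤ (1 + ‖t‖) * (θ * Ψ (z - u) + (1 - θ) * Ψ (z + t)) := h3
        _ = ‖t‖ * Ψ (z - u) + Ψ (z + t) := by
            rw [hθ1, hθ]; field_simp
    nlinarith

lemma Vi_bddBelow (f : PiLp 2 E → ℝ) (L : Fin n → ℝ) (Ψ : ∀ i, E i → ℝ)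
    (hL : ∀ i, 0 < L i) (hΨconv : ∀ i, ConvexOn ℝ Set.univ (Ψ i))
    (hΨcont : ∀ i, Continuous (Ψ i)) (x : PiLp 2 E) (i : Fin n) :
    BddBelow (Set.range (Vi f L Ψ x i)) := by
  obtain ⟨M, hM0, hM⟩ := convex_lower_bound (Ψ i) (hΨconv i) (hΨcont i) (x i)
  set g := (gradient f x) i with hg
  refine ⟨Ψ i (x i) - (‖g‖ + M) ^ 2 / (2 * L i), ?_⟩
  rintro _ ⟨t, rfl⟩
  have h1 : -(‖g‖ * ‖t‖) ≤ ⟪g, t⟫ := by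
    have := abs_real_inner_le_norm g t
    have := abs_le.mp this
    linarith [this.1]
  have h2 := hM t
  have hLi := hL i
  have hnt := norm_nonneg t
  have hng := norm_nonneg g
  unfold Vi
  rw [← hg]
  have key : (‖g‖ + M) ^ 2 / (2 * L i) + L i / 2 * ‖t‖ ^ 2 - (‖g‖ + M) * ‖t‖ ≥ 0 := by
    rw [ge_iff_le, ← sub_nonneg] at *
    have e : (‖g‖ + M) ^ 2 / (2 * L i) + L i / 2 * ‖t‖ ^ 2 - (‖g‖ + M) * ‖t‖ - 0
        = (L i * ‖t‖ - (‖g‖ + M)) ^ 2 / (2 * L i) := by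
      field_simp
      ring
    rw [e]
    positivity
  nlinarith

lemma sumPsi_update (Ψ : ∀ i, E i → ℝ) (x : PiLp 2 E) (i : Fin n) (t : E i) :
    ∑ j, Ψ j ((x + blockEmbed i t) j) = ∑ j, Ψ j (x j) - Ψ i (x i) + Ψ i (x i + t) := by
  have happ : ∀ j, (x + blockEmbed i t) j = x j + Pi.single i t j := fun j => rfl
  rw [← Finset.add_sum_erase _ (fun j => Ψ j ((x + blockEmbed i t) j)) (Finset.mem_univ i),
      ← Finset.add_sum_erase _ (fun j => Ψ j (x j)) (Finset.mem_univ i)]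
  have h1 : Ψ i ((x + blockEmbed i t) i) = Ψ i (x i + t) := by
    rw [happ i, Pi.single_eq_same]
  have h2 : ∑ j ∈ Finset.univ.erase i, Ψ j ((x + blockEmbed i t) j)
      = ∑ j ∈ Finset.univ.erase i, Ψ j (x j) := by
    apply Finset.sum_congr rfl
    intro j hj
    rw [happ j, Pi.single_eq_of_ne (Finset.ne_of_mem_erase hj), add_zero]
  rw [h1, h2]
  ring

lemma Ffun_comb (f : PiLp 2 E → ℝ) (Ψ : ∀ i, E i → ℝ)
    (hfconv : ConvexOn ℝ Set.univ f) (hΨconv : ∀ i, ConvexOn ℝ Set.univ (Ψ i))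
    (x y : PiLp 2 E) (a b : ℝ) (ha : 0 ≤ a) (hb : 0 ≤ b) (hab : a + b = 1) :
    Ffun f Ψ (a • x + b • y) ≤ a * Ffun f Ψ x + b * Ffun f Ψ y := by
  have hf := hfconv.2 (Set.mem_univ x) (Set.mem_univ y) ha hb hab
  have hΨ : ∀ i, Ψ i ((a • x + b • y) i) ≤ a * Ψ i (x i) + b * Ψ i (y i) := by
    intro i
    have h : (a • x + b • y) i = a • x i + b • y i := rfl
    rw [h]
    exact (hΨconv i).2 (Set.mem_univ (x i)) (Set.mem_univ (y i)) ha hb hab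
  have hsum : ∑ i, Ψ i ((a • x + b • y) i) ≤ ∑ i, (a * Ψ i (x i) + b * Ψ i (y i)) :=
    Finset.sum_le_sum (fun i _ => hΨ i)
  unfold Ffun
  simp only [smul_eq_mul] at hf
  rw [Finset.sum_add_distrib] at hsum
  rw [← Finset.mul_sum, ← Finset.mul_sum] at hsum
  linarith

/-- One-step expected residual bound for inexact coordinate descent with uniform probabilities:
`(1/n) Σ_i F(x + U_i T_i) − F* ≤ δ̄ + max{1 − (F(x)−F*)/(2n‖x−x*‖_L²), 1 − 1/(2n)}·(F(x)−F*)`. -/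
theorem expected_residual_decrease
    (hn : 0 < n)
    (L : Fin n → ℝ) (hL : ∀ i, 0 < L i)
    (f : PiLp 2 E → ℝ) (hfdiff : Differentiable ℝ f) (hfconv : ConvexOn ℝ Set.univ f)
    (hLip : ∀ (x : PiLp 2 E) (i : Fin n) (t : E i),
      ‖(gradient f (x + blockEmbed i t)) i - (gradient f x) i‖ ≤ L i * ‖t‖)
    (Ψ : ∀ i, E i → ℝ) (hΨconv : ∀ i, ConvexOn ℝ Set.univ (Ψ i))
    (hΨcont : ∀ i, Continuous (Ψ i))
    (Fstar : ℝ) (xstar : PiLp 2 E) (hstar : Ffun f Ψ xstar = Fstar)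
    (hmin : ∀ y, Fstar ≤ Ffun f Ψ y)
    (x : PiLp 2 E) (hx : 0 < ∑ i, L i * ‖x i - xstar i‖ ^ 2)
    (δ : Fin n → ℝ) (hδ : ∀ i, 0 ≤ δ i)
    (T : PiLp 2 E) (hT : IsInexactUpdate f L Ψ δ x T) :
    (1 / (n : ℝ)) * ∑ i, Ffun f Ψ (x + blockEmbed i (T i)) - Fstar ≤
      (1 / (n : ℝ)) * ∑ i, δ i +
        max (1 - (Ffun f Ψ x - Fstar) / (2 * n * ∑ i, L i * ‖x i - xstar i‖ ^ 2))
            (1 - 1 / (2 * (n : ℝ))) * (Ffun f Ψ x - Fstar) := by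
  have hn' : (0:ℝ) < n := by exact_mod_cast hn
  have hnne : (n:ℝ) ≠ 0 := hn'.ne'
  set R2 := ∑ i, L i * ‖x i - xstar i‖ ^ 2 with hR2
  set Δ := Ffun f Ψ x - Fstar with hΔdef
  have hΔ0 : 0 ≤ Δ := sub_nonneg.mpr (hmin x)
  have hFxΔ : Ffun f Ψ x = Δ + Fstar := by rw [hΔdef]; ring
  have key : ∀ lam : ℝ, 0 ≤ lam → lam ≤ 1 →
      ∑ i, Ffun f Ψ (x + blockEmbed i (T i)) ≤
        n * Ffun f Ψ x + ∑ i, δ i - lam * Δ + lam ^ 2 / 2 * R2 := by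
    intro lam hl0 hl1
    have hA : ∀ i, Ffun f Ψ (x + blockEmbed i (T i)) ≤
        Ffun f Ψ x - Ψ i (x i) + Vi f L Ψ x i (T i) := by
      intro i
      have hd := descent_lemma f hfdiff L hL hLip x i (T i)
      have hs := sumPsi_update Ψ x i (T i)
      unfold Ffun Vi
      linarith
    have hB : ∀ i, Vi f L Ψ x i (T i) ≤ δ i + Vi f L Ψ x i (lam • (xstar i - x i)) := by
      intro i
      have h1 := le_trans (hT i) (min_le_right _ _)
      have h2 : (⨅ t : E i, Vi f L Ψ x i t) ≤ Vi f L Ψ x i (lam • (xstar i - x i)) :=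
        ciInf_le (Vi_bddBelow f L Ψ hL hΨconv hΨcont x i) _
      linarith
    set y : PiLp 2 E := x + lam • (xstar - x) with hy
    have hyx : y - x = lam • (xstar - x) := add_sub_cancel_left x _
    have hC : ∑ i, Vi f L Ψ x i (lam • (xstar i - x i)) ≤
        (1 - lam) * Ffun f Ψ x + lam * Fstar - f x + lam ^ 2 / 2 * R2 := by
      have hVsplit : ∑ i, Vi f L Ψ x i (lam • (xstar i - x i)) =
          (∑ i, ⟪(gradient f x) i, lam • (xstar i - x i)⟫) +
          (∑ i, L i / 2 * ‖lam • (xstar i - x i)‖ ^ 2) +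
          (∑ i, Ψ i (x i + lam • (xstar i - x i))) := by
        rw [← Finset.sum_add_distrib, ← Finset.sum_add_distrib]
        rfl
      have hinner : (∑ i, ⟪(gradient f x) i, lam • (xstar i - x i)⟫)
          = ⟪gradient f x, y - x⟫ := by
        rw [hyx, PiLp.inner_apply]
        rfl
      have hfy : f x + ⟪gradient f x, y - x⟫ ≤ f y := by
        have := grad_ineq f hfdiff hfconv x (y - x)
        rwa [add_sub_cancel] at this
      have hquad : (∑ i, L i / 2 * ‖lam • (xstar i - x i)‖ ^ 2) = lam ^ 2 / 2 * R2 := by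
        rw [hR2, Finset.mul_sum]
        apply Finset.sum_congr rfl
        intro i _
        rw [norm_smul, mul_pow, Real.norm_eq_abs, sq_abs, norm_sub_rev]
        ring
      have hΨy : (∑ i, Ψ i (x i + lam • (xstar i - x i))) = ∑ i, Ψ i (y i) := rfl
      have hycomb : y = (1 - lam) • x + lam • xstar := by
        rw [hy]; module
      have hFy : Ffun f Ψ y ≤ (1 - lam) * Ffun f Ψ x + lam * Fstar := by
        rw [hycomb, ← hstar]
        exact Ffun_comb f Ψ hfconv hΨconv x xstar (1 - lam) lam (by linarith) hl0 (by ring)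
      have hFy' : Ffun f Ψ y = f y + ∑ i, Ψ i (y i) := rfl
      rw [hVsplit, hinner, hquad, hΨy]
      linarith
    have hsum : ∑ i, Ffun f Ψ (x + blockEmbed i (T i)) ≤
        ∑ i, (Ffun f Ψ x - Ψ i (x i) + (δ i + Vi f L Ψ x i (lam • (xstar i - x i)))) :=
      Finset.sum_le_sum (fun i _ => le_trans (hA i) (by linarith [hB i]))
    have hsplit : ∑ i, (Ffun f Ψ x - Ψ i (x i) + (δ i + Vi f L Ψ x i (lam • (xstar i - x i))))
        = n * Ffun f Ψ x - ∑ i, Ψ i (x i) + ∑ i, δ i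
          + ∑ i, Vi f L Ψ x i (lam • (xstar i - x i)) := by
      rw [Finset.sum_add_distrib, Finset.sum_add_distrib, Finset.sum_sub_distrib,
        Finset.sum_const, Finset.card_univ, Fintype.card_fin, nsmul_eq_mul]
      ring
    have hFx : Ffun f Ψ x = f x + ∑ i, Ψ i (x i) := rfl
    rw [hsplit] at hsum
    have hΔeq : Δ = Ffun f Ψ x - Fstar := hΔdef
    linarith
  have h1n : (0:ℝ) ≤ 1 / (n:ℝ) := by positivity
  by_cases hcase : Δ ≤ R2
  · -- take lam = Δ / R2
    have hlam0 : 0 ≤ Δ / R2 := div_nonneg hΔ0 hx.le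
    have hlam1 : Δ / R2 ≤ 1 := (div_le_one hx).mpr hcase
    have hk := key (Δ / R2) hlam0 hlam1
    rw [hFxΔ] at hk
    have hmul := mul_le_mul_of_nonneg_left hk h1n
    have hmax := le_max_left (1 - Δ / (2 * n * R2)) (1 - 1 / (2 * (n:ℝ)))
    have hmm := mul_le_mul_of_nonneg_right hmax hΔ0
    have hR2ne : R2 ≠ 0 := hx.ne'
    have harith : (1/(n:ℝ)) * ((n:ℝ) * (Δ + Fstar) + ∑ i, δ i
          - (Δ / R2) * Δ + (Δ / R2) ^ 2 / 2 * R2) - Fstar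
        = (1/(n:ℝ)) * ∑ i, δ i + (1 - Δ / (2 * n * R2)) * Δ := by
      field_simp
      ring
    linarith
  · push_neg at hcase
    have hk := key 1 zero_le_one le_rfl
    rw [hFxΔ] at hk
    have hk2 : ∑ i, Ffun f Ψ (x + blockEmbed i (T i)) ≤
        (n:ℝ) * (Δ + Fstar) + ∑ i, δ i - Δ + Δ / 2 := by
      have : (1:ℝ) ^ 2 / 2 * R2 ≤ Δ / 2 := by nlinarith
      linarith
    have hmul := mul_le_mul_of_nonneg_left hk2 h1n
    have hmax := le_max_right (1 - Δ / (2 * n * R2)) (1 - 1 / (2 * (n:ℝ)))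
    have hmm := mul_le_mul_of_nonneg_right hmax hΔ0
    have harith : (1/(n:ℝ)) * ((n:ℝ) * (Δ + Fstar) + ∑ i, δ i - Δ + Δ / 2) - Fstar
        = (1/(n:ℝ)) * ∑ i, δ i + (1 - 1 / (2 * (n:ℝ))) * Δ := by
      field_simp
      ring
    linarith
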